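/- Let ξ_1,…,ξ_n be independent random variables with max_i ‖ξ_i‖_{ψ_α} ≤ K for some K > 0 and α ∈ (0,1]. Then there exists a constant C_α depending only on α such that for all p ≥ 1, ‖ Σ_{i=1}^n (ξ_i − E[ξ_i]) ‖_p ≤ C_α K ( sqrt(p n) + p^{1/α} ). -/

import Mathlib

open MeasureTheory ProbabilityTheory Finset
open scoped ENNReal
noncomputable section

def psiNorm {Ω : Type*} [MeasurableSpace Ω] (α : ℝ) (μ : Measure Ω) (ξ : Ω → ℝ) : ℝ≥0∞ :=
  sInf {t : ℝ≥0∞ | 0 < t ∧ t ≠ ⊤ ∧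
    ∫⁻ ω, ENNReal.ofReal (Real.exp ((|ξ ω| / t.toReal) ^ α)) ∂μ ≤ 2}

lemma rpow_le_self_rpow_mul_exp {s u : ℝ} (hs : 0 < s) (hu : 0 ≤ u) :
    u ^ s ≤ s ^ s * Real.exp u := by
  rcases eq_or_lt_of_le hu with h | h
  · rw [← h, Real.zero_rpow hs.ne']
    positivity
  · have hlog : Real.log u ≤ Real.log s + u / s := by
      have h1 : Real.log (u/s) ≤ u/s - 1 := Real.log_le_sub_one_of_pos (by positivity)
      have h2 : Real.log (u/s) = Real.log u - Real.log s := Real.log_div h.ne' hs.ne'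
      have h3 : u / s - 1 ≤ u / s := by linarith
      linarith
    calc u ^ s = Real.exp (Real.log u * s) := Real.rpow_def_of_pos h s
      _ ≤ Real.exp ((Real.log s + u/s) * s) := by
          apply Real.exp_le_exp.mpr
          exact mul_le_mul_of_nonneg_right hlog hs.le
      _ = Real.exp (Real.log s * s) * Real.exp u := by
          rw [← Real.exp_add]; congr 1; field_simp
      _ = s ^ s * Real.exp u := by rw [← Real.rpow_def_of_pos hs]

lemma psi_exists_t {Ω : Type*} [MeasurableSpace Ω] (μ : Measure Ω) (α : ℝ) {K : ℝ} (hK : 0 < K)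
    (ξ : Ω → ℝ) (h : psiNorm α μ ξ ≤ ENNReal.ofReal K) :
    ∃ t : ℝ, 0 < t ∧ t ≤ 2*K ∧
      ∫⁻ ω, ENNReal.ofReal (Real.exp ((|ξ ω| / t) ^ α)) ∂μ ≤ 2 := by
  have hlt : psiNorm α μ ξ < ENNReal.ofReal (2*K) := by
    refine lt_of_le_of_lt h ?_
    rw [ENNReal.ofReal_lt_ofReal_iff (by linarith)]
    linarith
  rw [psiNorm, sInf_lt_iff] at hlt
  obtain ⟨t₀, ⟨ht0, htop, hint⟩, hlt2⟩ := hlt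
  refine ⟨t₀.toReal, ENNReal.toReal_pos ht0.ne' htop, ?_, hint⟩
  exact le_of_lt ((ENNReal.lt_ofReal_iff_toReal_lt htop).mp hlt2)

lemma psi_moment {Ω : Type*} [MeasurableSpace Ω] (μ : Measure Ω) [IsProbabilityMeasure μ]
    {α : ℝ} (hα0 : 0 < α) {K : ℝ} (hK : 0 < K) {ξ : Ω → ℝ} (hmeas : Measurable ξ)
    (hpsi : psiNorm α μ ξ ≤ ENNReal.ofReal K) (m : ℕ) (hm : 1 ≤ m) :
    Integrable (fun ω => |ξ ω|^m) μ ∧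
      ∫ ω, |ξ ω|^m ∂μ ≤ (4*K*(1/α)^(1/α) * (m:ℝ)^(1/α))^m := by
  obtain ⟨t, ht0, htK, hint⟩ := psi_exists_t μ α hK ξ hpsi
  set s : ℝ := (m:ℝ) * (1/α) with hsdef
  have hm1 : (1:ℝ) ≤ (m:ℝ) := by exact_mod_cast hm
  have hs0 : 0 < s := by
    apply mul_pos (by linarith); positivity
  set D : ℝ := t^m * s^s with hDdef
  have hD0 : 0 < D := by
    apply mul_pos (by positivity) (Real.rpow_pos_of_pos hs0 s)
  -- pointwise bound
  have hpt : ∀ ω, |ξ ω|^m ≤ D * Real.exp ((|ξ ω| / t) ^ α) := by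
    intro ω
    set u : ℝ := (|ξ ω| / t) ^ α with hudef
    have hu0 : 0 ≤ u := Real.rpow_nonneg (by positivity) α
    have h1 : u ^ s ≤ s ^ s * Real.exp u := rpow_le_self_rpow_mul_exp hs0 hu0
    have h2 : u ^ s = (|ξ ω| / t) ^ (m:ℕ) := by
      rw [hudef, ← Real.rpow_natCast (|ξ ω| / t) m, ← Real.rpow_mul (by positivity)]
      congr 1
      rw [hsdef, mul_comm, mul_assoc, one_div, inv_mul_cancel₀ hα0.ne', mul_one]
    have h3 : |ξ ω|^m = t^m * ((|ξ ω| / t) ^ (m:ℕ)) := by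
      rw [div_pow]
      field_simp
    rw [h3, ← h2]
    calc t^m * u^s ≤ t^m * (s^s * Real.exp u) := by
          apply mul_le_mul_of_nonneg_left h1 (by positivity)
      _ = D * Real.exp u := by rw [hDdef]; ring
  -- lintegral bound
  have hlint : ∫⁻ ω, ENNReal.ofReal (|ξ ω|^m) ∂μ ≤ ENNReal.ofReal (2*D) := by
    calc ∫⁻ ω, ENNReal.ofReal (|ξ ω|^m) ∂μ
        ≤ ∫⁻ ω, ENNReal.ofReal (D * Real.exp ((|ξ ω| / t) ^ α)) ∂μ :=
          lintegral_mono (fun ω => ENNReal.ofReal_le_ofReal (hpt ω))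
      _ = ∫⁻ ω, ENNReal.ofReal D * ENNReal.ofReal (Real.exp ((|ξ ω| / t) ^ α)) ∂μ := by
          apply lintegral_congr
          intro ω
          rw [ENNReal.ofReal_mul hD0.le]
      _ = ENNReal.ofReal D * ∫⁻ ω, ENNReal.ofReal (Real.exp ((|ξ ω| / t) ^ α)) ∂μ :=
          lintegral_const_mul' _ _ ENNReal.ofReal_ne_top
      _ ≤ ENNReal.ofReal D * 2 := by
          apply mul_le_mul_right hint
      _ = ENNReal.ofReal (2*D) := by
          rw [show (2:ℝ≥0∞) = ENNReal.ofReal 2 by norm_num, ← ENNReal.ofReal_mul hD0.le]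
          congr 1; ring
  have hmeas' : Measurable (fun ω => |ξ ω|^m) := (hmeas.abs).pow_const m
  have hnn : ∀ ω, 0 ≤ |ξ ω|^m := fun ω => by positivity
  have hintg : Integrable (fun ω => |ξ ω|^m) μ := by
    refine ⟨hmeas'.aestronglyMeasurable, ?_⟩
    rw [hasFiniteIntegral_iff_norm]
    have : ∀ ω, ENNReal.ofReal ‖|ξ ω|^m‖ = ENNReal.ofReal (|ξ ω|^m) := by
      intro ω; rw [Real.norm_of_nonneg (hnn ω)]
    calc ∫⁻ ω, ENNReal.ofReal ‖|ξ ω|^m‖ ∂μ = ∫⁻ ω, ENNReal.ofReal (|ξ ω|^m) ∂μ :=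
          lintegral_congr this
      _ ≤ ENNReal.ofReal (2*D) := hlint
      _ < ⊤ := ENNReal.ofReal_lt_top
  refine ⟨hintg, ?_⟩
  have hint_le : ∫ ω, |ξ ω|^m ∂μ ≤ 2*D := by
    rw [integral_eq_lintegral_of_nonneg_ae (Filter.Eventually.of_forall hnn)
      hmeas'.aestronglyMeasurable]
    calc (∫⁻ ω, ENNReal.ofReal (|ξ ω|^m) ∂μ).toReal
        ≤ (ENNReal.ofReal (2*D)).toReal := by
          apply ENNReal.toReal_mono ENNReal.ofReal_ne_top hlint
      _ = 2*D := ENNReal.toReal_ofReal (by positivity)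
  refine hint_le.trans ?_
  -- 2*D ≤ (4K(1/α)^(1/α) m^(1/α))^m
  have hrw : ∀ x : ℝ, 0 ≤ x → x ^ s = (x^(1/α))^m := by
    intro x hx
    rw [hsdef, mul_comm, Real.rpow_mul hx, Real.rpow_natCast]
  have hss : s ^ s = ((m:ℝ)^(1/α))^m * ((1/α)^(1/α))^m := by
    calc s ^ s = ((m:ℝ) * (1/α)) ^ s := by rw [← hsdef]
      _ = (m:ℝ)^s * ((1/α):ℝ)^s := Real.mul_rpow (by positivity) (by positivity)
      _ = ((m:ℝ)^(1/α))^m * ((1/α)^(1/α))^m := by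
          rw [hrw (m:ℝ) (by positivity), hrw (1/α) (by positivity)]
  have h2m : (2:ℝ) ≤ 2^m := by
    calc (2:ℝ) = 2^1 := (pow_one 2).symm
      _ ≤ 2^m := pow_le_pow_right₀ (by norm_num) hm
  have htm : t^m ≤ (2*K)^m := pow_le_pow_left₀ ht0.le htK m
  calc 2*D = 2 * (t^m * (((m:ℝ)^(1/α))^m * ((1/α)^(1/α))^m)) := by rw [hDdef, hss]
    _ ≤ 2^m * ((2*K)^m * (((m:ℝ)^(1/α))^m * ((1/α)^(1/α))^m)) := by
        have hx : (0:ℝ) ≤ ((m:ℝ)^(1/α))^m * ((1/α)^(1/α))^m := by positivity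
        apply mul_le_mul h2m (mul_le_mul_of_nonneg_right htm hx) (by positivity) (by positivity)
    _ = (4*K*(1/α)^(1/α) * (m:ℝ)^(1/α))^m := by
        rw [mul_pow, mul_pow, mul_pow, mul_pow]
        ring_nf
        rw [show (4:ℝ) = 2^2 by norm_num, ← pow_mul]
        ring_nf



def aC (ia : ℝ) : ℝ := 8 * Real.exp (1 + 2*ia) * (4:ℝ)^ia

lemma aC_pos (ia : ℝ) : 0 < aC ia := by unfold aC; positivity

lemma aC_ge_four {ia : ℝ} (hia : 1 ≤ ia) : 4 ≤ aC ia := by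
  unfold aC
  have h1 : (1:ℝ) ≤ Real.exp (1 + 2*ia) := by
    rw [Real.one_le_exp_iff]; linarith
  have h2 : (1:ℝ) ≤ (4:ℝ)^ia := Real.one_le_rpow (by norm_num) (by linarith)
  nlinarith

lemma rpow_split {x : ℝ} (hx : 0 < x) (p : ℝ) : x ^ p = x * x^(p-1) := by
  calc x ^ p = x ^ (1 + (p-1)) := by congr 1; ring
    _ = x ^ (1:ℝ) * x ^ (p-1) := Real.rpow_add hx 1 (p-1)
    _ = x * x ^ (p-1) := by rw [Real.rpow_one]

lemma pow_self_le_factorial_mul_exp (j : ℕ) :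
    (j:ℝ)^j ≤ (j.factorial : ℝ) * Real.exp 1 ^ j := by
  have h := Real.sum_le_exp_of_nonneg (x := (j:ℝ)) (by positivity) (j+1)
  have hterm : (j:ℝ)^j / (j.factorial : ℝ) ≤ Real.exp j := by
    refine le_trans ?_ h
    have := Finset.single_le_sum (f := fun i => (j:ℝ)^i / (i.factorial : ℝ))
      (fun i _ => by positivity) (Finset.self_mem_range_succ j)
    simpa using this
  rw [Real.exp_one_pow]
  have hf : (0:ℝ) < (j.factorial : ℝ) := by exact_mod_cast j.factorial_pos
  calc (j:ℝ)^j = ((j:ℝ)^j / j.factorial) * j.factorial := by field_simp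
    _ ≤ Real.exp j * j.factorial := mul_le_mul_of_nonneg_right hterm hf.le
    _ = (j.factorial : ℝ) * Real.exp j := by ring

lemma claim1 {ia : ℝ} (hia : 1 ≤ ia) {j N : ℕ} (hj1 : 1 ≤ j) (hjN : j ≤ N - 1) (hN : 2 ≤ N) :
    (2:ℝ)^(j+2) * (N:ℝ)^j * (((j:ℝ)+1)^ia)^(j+1)
      ≤ (j.factorial : ℝ) * aC ia ^ (j+1) * (N:ℝ) * ((N:ℝ)^ia)^(j-1) := by
  have hJ1 : (1:ℝ) ≤ (j:ℝ) := by exact_mod_cast hj1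
  have hJ0 : (0:ℝ) < (j:ℝ) := by linarith
  have hNr : (2:ℝ) ≤ (N:ℝ) := by exact_mod_cast hN
  have hN0 : (0:ℝ) < (N:ℝ) := by linarith
  have hjNr : (j:ℝ) ≤ (N:ℝ) := by
    have : j ≤ N := le_trans hjN (Nat.sub_le _ _); exact_mod_cast this
  -- A
  have hA : (((j:ℝ)+1)^ia)^(j+1) ≤ ((4:ℝ)^ia)^j * (((j:ℝ))^ia)^(j+1) := by
    have h2ia1 : (1:ℝ) ≤ (2:ℝ)^ia := Real.one_le_rpow (by norm_num) (by linarith)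
    have hstep : ((j:ℝ)+1)^ia ≤ (2:ℝ)^ia * ((j:ℝ))^ia := by
      rw [← Real.mul_rpow (by norm_num) hJ0.le]
      exact Real.rpow_le_rpow (by linarith) (by linarith) (by linarith)
    calc (((j:ℝ)+1)^ia)^(j+1) ≤ ((2:ℝ)^ia * ((j:ℝ))^ia)^(j+1) := by
          apply pow_le_pow_left₀ (by positivity) hstep
      _ = ((2:ℝ)^ia)^(j+1) * (((j:ℝ))^ia)^(j+1) := mul_pow _ _ _
      _ ≤ ((2:ℝ)^ia)^(2*j) * (((j:ℝ))^ia)^(j+1) := by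
          apply mul_le_mul_of_nonneg_right _ (by positivity)
          exact pow_le_pow_right₀ h2ia1 (by omega)
      _ = ((4:ℝ)^ia)^j * (((j:ℝ))^ia)^(j+1) := by
          rw [pow_mul]
          congr 2
          rw [sq, ← Real.mul_rpow (by norm_num) (by norm_num)]
          norm_num
  -- C
  have hC : (((j:ℝ))^ia)^(j-1) ≤ (j:ℝ)^(j-1) * ((N:ℝ)^(ia-1))^(j-1) := by
    have hstep : ((j:ℝ))^ia ≤ (j:ℝ) * ((N:ℝ))^(ia-1) := by
      rw [rpow_split hJ0 ia]
      exact mul_le_mul_of_nonneg_left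
        (Real.rpow_le_rpow hJ0.le hjNr (by linarith)) hJ0.le
    calc (((j:ℝ))^ia)^(j-1) ≤ ((j:ℝ) * ((N:ℝ))^(ia-1))^(j-1) :=
          pow_le_pow_left₀ (by positivity) hstep _
      _ = (j:ℝ)^(j-1) * ((N:ℝ)^(ia-1))^(j-1) := mul_pow _ _ _
  -- D : N^j * (N^(ia-1))^(j-1) = N * (N^ia)^(j-1)
  have hD : (N:ℝ)^j * ((N:ℝ)^(ia-1))^(j-1) = (N:ℝ) * ((N:ℝ)^ia)^(j-1) := by
    have h1 : (N:ℝ)^j = (N:ℝ) * (N:ℝ)^(j-1) := by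
      rw [← pow_succ']
      congr 1; omega
    rw [h1, mul_assoc, ← mul_pow]
    congr 2
    rw [rpow_split hN0 ia]
  -- E : ((j:ℝ)^ia)^2 ≤ (Real.exp (2*ia))^j
  have hE : (((j:ℝ))^ia)^2 ≤ (Real.exp (2*ia))^j := by
    have hjexp : (j:ℝ) ≤ Real.exp (j:ℝ) := by
      have := Real.add_one_le_exp (j:ℝ); linarith
    have h1 : ((j:ℝ))^ia ≤ Real.exp ((j:ℝ) * ia) := by
      calc ((j:ℝ))^ia ≤ (Real.exp (j:ℝ))^ia :=
            Real.rpow_le_rpow hJ0.le hjexp (by linarith)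
        _ = Real.exp ((j:ℝ) * ia) := (Real.exp_mul _ _).symm
    calc (((j:ℝ))^ia)^2 ≤ (Real.exp ((j:ℝ) * ia))^2 :=
          pow_le_pow_left₀ (by positivity) h1 _
      _ = Real.exp ((j:ℝ) * ia * 2) := by
          rw [← Real.exp_nat_mul]; congr 1; ring
      _ = (Real.exp (2*ia))^j := by
          rw [← Real.exp_nat_mul]; congr 1; ring
  -- F : (j:ℝ)^(j-1) ≤ j! * e^j
  have hF : (j:ℝ)^(j-1) ≤ (j.factorial : ℝ) * Real.exp 1 ^ j := by
    calc (j:ℝ)^(j-1) ≤ (j:ℝ)^j := pow_le_pow_right₀ hJ1 (Nat.sub_le _ _)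
      _ ≤ (j.factorial : ℝ) * Real.exp 1 ^ j := pow_self_le_factorial_mul_exp j
  -- combine
  have key : (2:ℝ)^(j+2) * (N:ℝ)^j * (((j:ℝ)+1)^ia)^(j+1)
      ≤ 4 * (2 * Real.exp 1 * Real.exp (2*ia) * (4:ℝ)^ia)^j
        * ((j.factorial : ℝ) * ((N:ℝ) * ((N:ℝ)^ia)^(j-1))) := by
    calc (2:ℝ)^(j+2) * (N:ℝ)^j * (((j:ℝ)+1)^ia)^(j+1)
        ≤ (2:ℝ)^(j+2) * (N:ℝ)^j * (((4:ℝ)^ia)^j * (((j:ℝ))^ia)^(j+1)) := by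
          apply mul_le_mul_of_nonneg_left hA (by positivity)
      _ = (2:ℝ)^(j+2) * ((4:ℝ)^ia)^j * ((N:ℝ)^j * ((((j:ℝ))^ia)^(j-1) * ((((j:ℝ))^ia)^2))) := by
          rw [show j + 1 = (j-1) + 2 by omega, pow_add]
          ring
      _ ≤ (2:ℝ)^(j+2) * ((4:ℝ)^ia)^j *
            ((N:ℝ)^j * (((j:ℝ)^(j-1) * ((N:ℝ)^(ia-1))^(j-1)) * (Real.exp (2*ia))^j)) := by
          apply mul_le_mul_of_nonneg_left _ (by positivity)
          apply mul_le_mul_of_nonneg_left _ (by positivity)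
          exact mul_le_mul hC hE (by positivity) (by positivity)
      _ = (2:ℝ)^(j+2) * ((4:ℝ)^ia)^j * (Real.exp (2*ia))^j * (j:ℝ)^(j-1)
            * ((N:ℝ)^j * ((N:ℝ)^(ia-1))^(j-1)) := by ring
      _ ≤ (2:ℝ)^(j+2) * ((4:ℝ)^ia)^j * (Real.exp (2*ia))^j
            * ((j.factorial : ℝ) * Real.exp 1 ^ j)
            * ((N:ℝ)^j * ((N:ℝ)^(ia-1))^(j-1)) := by
          apply mul_le_mul_of_nonneg_right _ (by positivity)
          exact mul_le_mul_of_nonneg_left hF (by positivity)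
      _ = 4 * (2 * Real.exp 1 * Real.exp (2*ia) * (4:ℝ)^ia)^j
            * ((j.factorial : ℝ) * ((N:ℝ)^j * ((N:ℝ)^(ia-1))^(j-1))) := by
          rw [pow_add]
          ring
      _ = 4 * (2 * Real.exp 1 * Real.exp (2*ia) * (4:ℝ)^ia)^j
            * ((j.factorial : ℝ) * ((N:ℝ) * ((N:ℝ)^ia)^(j-1))) := by rw [hD]
  refine key.trans ?_
  -- now: 4 * q^j * (j! * (N * (N^ia)^(j-1))) ≤ j! * a^(j+1) * N * (N^ia)^(j-1)
  have hq : 2 * Real.exp 1 * Real.exp (2*ia) * (4:ℝ)^ia ≤ aC ia := by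
    unfold aC
    rw [Real.exp_add]
    have hx : (0:ℝ) ≤ Real.exp 1 * Real.exp (2*ia) * (4:ℝ)^ia := by positivity
    nlinarith [hx]
  have hq0 : (0:ℝ) ≤ 2 * Real.exp 1 * Real.exp (2*ia) * (4:ℝ)^ia := by positivity
  have h4a : (4:ℝ) ≤ aC ia := aC_ge_four hia
  calc 4 * (2 * Real.exp 1 * Real.exp (2*ia) * (4:ℝ)^ia)^j
        * ((j.factorial : ℝ) * ((N:ℝ) * ((N:ℝ)^ia)^(j-1)))
      ≤ aC ia * (aC ia)^j * ((j.factorial : ℝ) * ((N:ℝ) * ((N:ℝ)^ia)^(j-1))) := by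
        apply mul_le_mul_of_nonneg_right _ (by positivity)
        exact mul_le_mul h4a (pow_le_pow_left₀ hq0 hq _) (by positivity) (by linarith)
    _ = (j.factorial : ℝ) * aC ia ^ (j+1) * (N:ℝ) * ((N:ℝ)^ia)^(j-1) := by
        rw [pow_succ']
        ring

lemma claim2 {j N : ℕ} (hjN : j ≤ N - 1) :
    ((N-1).choose j : ℝ) * (j.factorial : ℝ) ≤ (N:ℝ)^j := by
  have h : j.factorial * (N-1).choose j ≤ (N-1)^j := by
    rw [← Nat.descFactorial_eq_factorial_mul_choose]
    exact Nat.descFactorial_le_pow _ _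
  have h2 : ((N-1):ℕ)^j ≤ N^j := Nat.pow_le_pow_left (Nat.sub_le _ _) _
  calc ((N-1).choose j : ℝ) * (j.factorial : ℝ)
      = ((j.factorial * (N-1).choose j : ℕ) : ℝ) := by push_cast; ring
    _ ≤ (((N-1))^j : ℕ) := by exact_mod_cast h
    _ ≤ ((N^j : ℕ) : ℝ) := by exact_mod_cast h2
    _ = (N:ℝ)^j := by push_cast; ring

lemma numeric {ia : ℝ} (hia : 1 ≤ ia) {b : ℝ} (hb : 0 < b) {n N : ℕ} (hn : 1 ≤ n) (hN : 2 ≤ N) :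
    (n:ℝ) * ∑ j ∈ Finset.Ico 1 N,
        2 * ((N-1).choose j : ℝ) * (b * ((j:ℝ)+1)^ia)^(j+1)
          * (aC ia * b * (Real.sqrt ((N:ℝ)*(n:ℝ)) + (N:ℝ)^ia))^(N-1-j)
      ≤ (aC ia * b * (Real.sqrt ((N:ℝ)*(n:ℝ)) + (N:ℝ)^ia))^N := by
  have hNr : (2:ℝ) ≤ (N:ℝ) := by exact_mod_cast hN
  have hN0 : (0:ℝ) < (N:ℝ) := by linarith
  have hn0 : (0:ℝ) < (n:ℝ) := by exact_mod_cast hn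
  have ha := aC_pos ia
  have hNia : (0:ℝ) < (N:ℝ)^ia := Real.rpow_pos_of_pos hN0 ia
  set G : ℝ := aC ia * b * (Real.sqrt ((N:ℝ)*(n:ℝ)) + (N:ℝ)^ia) with hGdef
  have hsq : (0:ℝ) ≤ Real.sqrt ((N:ℝ)*(n:ℝ)) := Real.sqrt_nonneg _
  have hG0 : 0 < G := by
    apply mul_pos (mul_pos ha hb); linarith
  have hG1 : aC ia * b * Real.sqrt ((N:ℝ)*(n:ℝ)) ≤ G := by
    rw [hGdef, mul_add]
    nlinarith [mul_pos ha hb]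
  have hG2 : aC ia * b * (N:ℝ)^ia ≤ G := by
    rw [hGdef, mul_add]
    nlinarith [mul_pos ha hb, mul_nonneg (mul_pos ha hb).le hsq]
  -- per term bound
  have hterm : ∀ j ∈ Finset.Ico 1 N,
      2 * ((N-1).choose j : ℝ) * (b * ((j:ℝ)+1)^ia)^(j+1)
          * G^(N-1-j) ≤ G^N / ((n:ℝ) * 2^(j+1)) := by
    intro j hj
    rw [Finset.mem_Ico] at hj
    obtain ⟨hj1, hjN'⟩ := hj
    have hjN : j ≤ N - 1 := by omega
    have hfac : (0:ℝ) < (j.factorial : ℝ) := by exact_mod_cast j.factorial_pos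
    -- step 1 : 2^(j+2) * C * ((J+1)^ia)^(j+1) ≤ a^(j+1) * N * (N^ia)^(j-1)
    have step1 : (2:ℝ)^(j+2) * ((N-1).choose j : ℝ) * (((j:ℝ)+1)^ia)^(j+1)
        ≤ aC ia^(j+1) * (N:ℝ) * ((N:ℝ)^ia)^(j-1) := by
      have h1 := claim1 hia hj1 hjN hN
      have h2 := claim2 (N := N) hjN
      have hpow : (0:ℝ) ≤ (((j:ℝ)+1)^ia)^(j+1) := by positivity
      -- multiply h2 by positive stuff and combine, cancel j!
      rw [← mul_le_mul_iff_of_pos_right hfac]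
      calc (2:ℝ)^(j+2) * ((N-1).choose j : ℝ) * (((j:ℝ)+1)^ia)^(j+1) * (j.factorial:ℝ)
          = (((N-1).choose j : ℝ) * (j.factorial:ℝ)) * ((2:ℝ)^(j+2) * (((j:ℝ)+1)^ia)^(j+1)) := by ring
        _ ≤ (N:ℝ)^j * ((2:ℝ)^(j+2) * (((j:ℝ)+1)^ia)^(j+1)) := by
            apply mul_le_mul_of_nonneg_right h2 (by positivity)
        _ = (2:ℝ)^(j+2) * (N:ℝ)^j * (((j:ℝ)+1)^ia)^(j+1) := by ring
        _ ≤ (j.factorial : ℝ) * aC ia ^ (j+1) * (N:ℝ) * ((N:ℝ)^ia)^(j-1) := h1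
        _ = aC ia^(j+1) * (N:ℝ) * ((N:ℝ)^ia)^(j-1) * (j.factorial:ℝ) := by ring
    -- step 2 : key inequality (T)
    have hT : ((n:ℝ) * 2^(j+1)) * (2 * ((N-1).choose j : ℝ) * (b * ((j:ℝ)+1)^ia)^(j+1))
        ≤ G^(j+1) := by
      have hGpow : G^(j+1) = G^2 * G^(j-1) := by
        rw [← pow_add]; congr 1; omega
      have hlow : (aC ia * b * Real.sqrt ((N:ℝ)*(n:ℝ)))^2 * (aC ia * b * (N:ℝ)^ia)^(j-1)
          ≤ G^2 * G^(j-1) := by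
        apply mul_le_mul
        · exact pow_le_pow_left₀ (by positivity) hG1 _
        · exact pow_le_pow_left₀ (by positivity) hG2 _
        · positivity
        · positivity
      have hexp : (aC ia * b * Real.sqrt ((N:ℝ)*(n:ℝ)))^2 * (aC ia * b * (N:ℝ)^ia)^(j-1)
          = (aC ia^(j+1) * (N:ℝ) * ((N:ℝ)^ia)^(j-1)) * (b^(j+1) * (n:ℝ)) := by
        have hs : Real.sqrt ((N:ℝ)*(n:ℝ))^2 = (N:ℝ)*(n:ℝ) := Real.sq_sqrt (by positivity)
        rw [mul_pow, mul_pow, hs, mul_pow, mul_pow]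
        rw [show aC ia^(j+1) = aC ia^2 * aC ia^(j-1) by rw [← pow_add]; congr 1; omega]
        rw [show b^(j+1) = b^2 * b^(j-1) by rw [← pow_add]; congr 1; omega]
        ring
      calc ((n:ℝ) * 2^(j+1)) * (2 * ((N-1).choose j : ℝ) * (b * ((j:ℝ)+1)^ia)^(j+1))
          = ((2:ℝ)^(j+2) * ((N-1).choose j : ℝ) * (((j:ℝ)+1)^ia)^(j+1)) * (b^(j+1) * (n:ℝ)) := by
            rw [mul_pow b]
            rw [show (2:ℝ)^(j+2) = 2^(j+1) * 2 by rw [pow_succ]]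
            ring
        _ ≤ (aC ia^(j+1) * (N:ℝ) * ((N:ℝ)^ia)^(j-1)) * (b^(j+1) * (n:ℝ)) := by
            apply mul_le_mul_of_nonneg_right step1 (by positivity)
        _ = (aC ia * b * Real.sqrt ((N:ℝ)*(n:ℝ)))^2 * (aC ia * b * (N:ℝ)^ia)^(j-1) := hexp.symm
        _ ≤ G^2 * G^(j-1) := hlow
        _ = G^(j+1) := hGpow.symm
    -- conclude
    have hGN : G^N = G^(j+1) * G^(N-1-j) := by
      rw [← pow_add]; congr 1; omega
    rw [le_div_iff₀ (by positivity)]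
    calc 2 * ((N-1).choose j : ℝ) * (b * ((j:ℝ)+1)^ia)^(j+1) * G^(N-1-j) * ((n:ℝ) * 2^(j+1))
        = (((n:ℝ) * 2^(j+1)) * (2 * ((N-1).choose j : ℝ) * (b * ((j:ℝ)+1)^ia)^(j+1))) * G^(N-1-j) := by
          ring
      _ ≤ G^(j+1) * G^(N-1-j) := by
          apply mul_le_mul_of_nonneg_right hT (by positivity)
      _ = G^N := hGN.symm
  -- sum up
  have hsum : ∑ j ∈ Finset.Ico 1 N,
      2 * ((N-1).choose j : ℝ) * (b * ((j:ℝ)+1)^ia)^(j+1) * G^(N-1-j)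
      ≤ ∑ j ∈ Finset.Ico 1 N, G^N / ((n:ℝ) * 2^(j+1)) :=
    Finset.sum_le_sum hterm
  have hgeom : ∑ j ∈ Finset.Ico 1 N, G^N / ((n:ℝ) * 2^(j+1)) ≤ G^N / (n:ℝ) := by
    have : ∑ j ∈ Finset.Ico 1 N, G^N / ((n:ℝ) * 2^(j+1))
        = (G^N / (n:ℝ)) * ∑ j ∈ Finset.Ico 1 N, (1/2:ℝ)^(j+1) := by
      rw [Finset.mul_sum]
      apply Finset.sum_congr rfl
      intro j _
      rw [div_pow, one_pow]
      field_simp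
    rw [this]
    have hle1 : ∑ j ∈ Finset.Ico 1 N, (1/2:ℝ)^(j+1) ≤ 1 := by
      have h2 : ∑ j ∈ Finset.Ico 1 N, (1/2:ℝ)^(j+1) ≤ ∑ j ∈ Finset.range N, (1/2:ℝ)^(j+1) := by
        apply Finset.sum_le_sum_of_subset_of_nonneg
        · rw [Finset.range_eq_Ico]
          exact Finset.Ico_subset_Ico (by omega) le_rfl
        · intro i _ _; positivity
      refine h2.trans ?_
      have h3 : ∑ j ∈ Finset.range N, (1/2:ℝ)^(j+1) = (1/2) * ∑ j ∈ Finset.range N, (1/2:ℝ)^j := by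
        rw [Finset.mul_sum]
        apply Finset.sum_congr rfl
        intro j _; rw [pow_succ]; ring
      rw [h3]
      have h4 : ∑ j ∈ Finset.range N, (1/2:ℝ)^j ≤ 2 := by
        have := geom_sum_eq (show (1/2:ℝ) ≠ 1 by norm_num) N
        rw [this]
        have : (0:ℝ) < (1/2:ℝ)^N := by positivity
        rw [div_le_iff_of_neg (by norm_num)]
        linarith
      linarith
    calc (G^N / (n:ℝ)) * ∑ j ∈ Finset.Ico 1 N, (1/2:ℝ)^(j+1)
        ≤ (G^N / (n:ℝ)) * 1 := by
          apply mul_le_mul_of_nonneg_left hle1 (by positivity)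
      _ = G^N / (n:ℝ) := mul_one _
  calc (n:ℝ) * ∑ j ∈ Finset.Ico 1 N,
        2 * ((N-1).choose j : ℝ) * (b * ((j:ℝ)+1)^ia)^(j+1) * G^(N-1-j)
      ≤ (n:ℝ) * (G^N / (n:ℝ)) := by
        apply mul_le_mul_of_nonneg_left (hsum.trans hgeom) hn0.le
    _ = G^N := by field_simp

lemma aux_pow_lam {x L : ℝ} (hx : 0 ≤ x) (hL : 0 < L) (M : ℕ) :
    x^M ≤ L^M + x^(M+1)/L := by
  rcases le_total x L with h | h
  · have h1 : x^M ≤ L^M := pow_le_pow_left₀ hx h M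
    have h2 : 0 ≤ x^(M+1)/L := by positivity
    linarith
  · have hx0 : 0 < x := lt_of_lt_of_le hL h
    have h1 : x^(M+1)/x ≤ x^(M+1)/L :=
      div_le_div_of_nonneg_left (by positivity) hL h
    have h2 : x^(M+1)/x = x^M := by
      rw [pow_succ]
      field_simp
    have h3 : 0 ≤ L^M := by positivity
    linarith [h1, h2 ▸ h1]

lemma cent_moment {Ω : Type*} [MeasurableSpace Ω] (μ : Measure Ω) [IsProbabilityMeasure μ]
    {ia b₀ : ℝ} (hia : 1 ≤ ia) (hb₀ : 0 < b₀) {ξ : Ω → ℝ} (hmeas : Measurable ξ)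
    (hint : ∀ m : ℕ, 1 ≤ m →
      Integrable (fun ω => |ξ ω|^m) μ ∧ ∫ ω, |ξ ω|^m ∂μ ≤ (b₀ * (m:ℝ)^ia)^m)
    (m : ℕ) (hm : 1 ≤ m) :
    Integrable (fun ω => |ξ ω - ∫ ω', ξ ω' ∂μ|^m) μ ∧
      ∫ ω, |ξ ω - ∫ ω', ξ ω' ∂μ|^m ∂μ ≤ (4 * b₀ * (m:ℝ)^ia)^m := by
  set c : ℝ := ∫ ω', ξ ω' ∂μ with hc
  have habs1 : Integrable (fun ω => |ξ ω|) μ ∧ ∫ ω, |ξ ω| ∂μ ≤ b₀ := by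
    have h := hint 1 le_rfl
    simp only [pow_one, Nat.cast_one, Real.one_rpow, mul_one] at h
    exact h
  have hxi_int : Integrable ξ μ := by
    rw [← integrable_norm_iff hmeas.aestronglyMeasurable]
    simpa only [Real.norm_eq_abs] using habs1.1
  have hcb : |c| ≤ b₀ := by
    calc |c| = ‖∫ ω', ξ ω' ∂μ‖ := by rw [Real.norm_eq_abs]
      _ ≤ ∫ ω', ‖ξ ω'‖ ∂μ := norm_integral_le_integral_norm ξ
      _ = ∫ ω', |ξ ω'| ∂μ := by simp [Real.norm_eq_abs]
      _ ≤ b₀ := habs1.2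
  have hpt : ∀ ω, |ξ ω - c|^m ≤ 2^m * (|ξ ω|^m + b₀^m) := by
    intro ω
    have h1 : |ξ ω - c| ≤ |ξ ω| + |c| := abs_sub _ _
    have h2 : |ξ ω - c|^m ≤ (|ξ ω| + |c|)^m :=
      pow_le_pow_left₀ (abs_nonneg _) h1 m
    have h3 : (|ξ ω| + |c|)^m ≤ 2^(m-1) * (|ξ ω|^m + |c|^m) :=
      add_pow_le (abs_nonneg _) (abs_nonneg _) m
    have h4 : |c|^m ≤ b₀^m := pow_le_pow_left₀ (abs_nonneg _) hcb m
    have h5 : (2:ℝ)^(m-1) ≤ 2^m := pow_le_pow_right₀ (by norm_num) (Nat.sub_le _ _)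
    have h6 : (0:ℝ) ≤ |ξ ω|^m + |c|^m := by positivity
    nlinarith [pow_nonneg (abs_nonneg (ξ ω)) m, pow_nonneg (abs_nonneg c) m,
      pow_nonneg (show (0:ℝ) ≤ 2 by norm_num) (m-1)]
  have hg_int : Integrable (fun ω => 2^m * (|ξ ω|^m + b₀^m)) μ :=
    (((hint m hm).1.add (integrable_const _)).const_mul _)
  have hmeas' : Measurable (fun ω => |ξ ω - c|^m) := ((hmeas.sub_const c).abs).pow_const m
  have hintg : Integrable (fun ω => |ξ ω - c|^m) μ := by
    refine Integrable.mono' hg_int hmeas'.aestronglyMeasurable ?_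
    filter_upwards with ω
    rw [Real.norm_eq_abs, abs_of_nonneg (by positivity)]
    exact hpt ω
  refine ⟨hintg, ?_⟩
  have hbm : b₀^m ≤ (b₀ * (m:ℝ)^ia)^m := by
    apply pow_le_pow_left₀ hb₀.le
    nlinarith [Real.one_le_rpow (show (1:ℝ) ≤ (m:ℝ) by exact_mod_cast hm)
      (show (0:ℝ) ≤ ia by linarith)]
  have h2m : (2:ℝ) ≤ 2^m := by
    calc (2:ℝ) = 2^1 := (pow_one 2).symm
      _ ≤ 2^m := pow_le_pow_right₀ (by norm_num) hm
  calc ∫ ω, |ξ ω - c|^m ∂μ ≤ ∫ ω, 2^m * (|ξ ω|^m + b₀^m) ∂μ :=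
        integral_mono hintg hg_int hpt
    _ = 2^m * ((∫ ω, |ξ ω|^m ∂μ) + b₀^m) := by
        rw [integral_const_mul, integral_add (hint m hm).1 (integrable_const _),
          integral_const]
        simp
    _ ≤ 2^m * ((b₀ * (m:ℝ)^ia)^m + (b₀ * (m:ℝ)^ia)^m) := by
        have := (hint m hm).2
        have h0 : (0:ℝ) ≤ 2^m := by positivity
        nlinarith [hbm, this]
    _ = 2 * 2^m * (b₀ * (m:ℝ)^ia)^m := by ring
    _ ≤ (4 * b₀ * (m:ℝ)^ia)^m := by
        have hX : (0:ℝ) ≤ (b₀ * (m:ℝ)^ia)^m := by positivity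
        have h4 : (4:ℝ)^m = 2^m * 2^m := by
          rw [show (4:ℝ) = 2*2 by norm_num, mul_pow]
        have heq : (4 * b₀ * (m:ℝ)^ia)^m = 4^m * (b₀ * (m:ℝ)^ia)^m := by
          rw [← mul_pow]; congr 1; ring
        rw [heq, h4]
        have h5 : (2:ℝ)*2^m ≤ 2^m*2^m :=
          mul_le_mul_of_nonneg_right h2m (by positivity)
        exact mul_le_mul_of_nonneg_right h5 hX

lemma integrable_abs_pow_sum {Ω : Type*} [MeasurableSpace Ω] {μ : Measure Ω}
    [IsProbabilityMeasure μ] {n : ℕ} {Y : Fin n → Ω → ℝ} (hYmeas : ∀ i, Measurable (Y i))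
    (hYint : ∀ i (m : ℕ), Integrable (fun ω => |Y i ω|^m) μ)
    (m : ℕ) (J : Finset (Fin n)) :
    Integrable (fun ω => |∑ i ∈ J, Y i ω|^m) μ := by
  classical
  induction J using Finset.induction with
  | empty => simpa using integrable_const (|(0:ℝ)|^m)
  | @insert i J hi ih =>
    have hmeasS : Measurable (fun ω => |∑ i ∈ insert i J, Y i ω|^m) :=
      ((Finset.measurable_sum _ (fun i _ => hYmeas i)).abs).pow_const m
    have hg_int : Integrable (fun ω => 2^m * (|Y i ω|^m + |∑ i' ∈ J, Y i' ω|^m)) μ :=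
      ((hYint i m).add ih).const_mul _
    refine Integrable.mono' hg_int hmeasS.aestronglyMeasurable ?_
    filter_upwards with ω
    rw [Real.norm_eq_abs, abs_of_nonneg (by positivity), Finset.sum_insert hi]
    have h1 : |Y i ω + ∑ i' ∈ J, Y i' ω| ≤ |Y i ω| + |∑ i' ∈ J, Y i' ω| := abs_add_le _ _
    have h2 : |Y i ω + ∑ i' ∈ J, Y i' ω|^m ≤ (|Y i ω| + |∑ i' ∈ J, Y i' ω|)^m :=
      pow_le_pow_left₀ (abs_nonneg _) h1 m
    have h3 := add_pow_le (abs_nonneg (Y i ω)) (abs_nonneg (∑ i' ∈ J, Y i' ω)) m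
    have h5 : (2:ℝ)^(m-1) ≤ 2^m := pow_le_pow_right₀ (by norm_num) (Nat.sub_le _ _)
    have h6 : (0:ℝ) ≤ |Y i ω|^m + |∑ i' ∈ J, Y i' ω|^m := by positivity
    calc |Y i ω + ∑ i' ∈ J, Y i' ω|^m
        ≤ 2^(m-1) * (|Y i ω|^m + |∑ i' ∈ J, Y i' ω|^m) := h2.trans h3
      _ ≤ 2^m * (|Y i ω|^m + |∑ i' ∈ J, Y i' ω|^m) :=
          mul_le_mul_of_nonneg_right h5 h6

lemma integrable_pow_sum {Ω : Type*} [MeasurableSpace Ω] {μ : Measure Ω}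
    [IsProbabilityMeasure μ] {n : ℕ} {Y : Fin n → Ω → ℝ} (hYmeas : ∀ i, Measurable (Y i))
    (hYint : ∀ i (m : ℕ), Integrable (fun ω => |Y i ω|^m) μ)
    (m : ℕ) (J : Finset (Fin n)) :
    Integrable (fun ω => (∑ i ∈ J, Y i ω)^m) μ := by
  refine Integrable.mono' (integrable_abs_pow_sum hYmeas hYint m J)
    (((Finset.measurable_sum _ (fun i _ => hYmeas i)).pow_const m).aestronglyMeasurable) ?_
  filter_upwards with ω
  rw [Real.norm_eq_abs, ← abs_pow]

def Gc (ia b : ℝ) (n N : ℕ) : ℝ :=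
  aC ia * b * (Real.sqrt ((N:ℝ)*(n:ℝ)) + (N:ℝ)^ia)

lemma Gc_nonneg {ia b : ℝ} (hb : 0 ≤ b) (n N : ℕ) : 0 ≤ Gc ia b n N := by
  unfold Gc
  have h0 := (aC_pos ia).le
  have h1 : (0:ℝ) ≤ Real.sqrt ((N:ℝ)*(n:ℝ)) := Real.sqrt_nonneg _
  have h2 : (0:ℝ) ≤ (N:ℝ)^ia := Real.rpow_nonneg (by positivity) ia
  exact mul_nonneg (mul_nonneg h0 hb) (by linarith)

lemma Gc_pos {ia b : ℝ} (hb : 0 < b) {n N : ℕ} (hN : 1 ≤ N) : 0 < Gc ia b n N := by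
  unfold Gc
  have h0 := aC_pos ia
  have h1 : (0:ℝ) ≤ Real.sqrt ((N:ℝ)*(n:ℝ)) := Real.sqrt_nonneg _
  have h2 : (0:ℝ) < (N:ℝ)^ia := Real.rpow_pos_of_pos (by exact_mod_cast hN) ia
  exact mul_pos (mul_pos h0 hb) (by linarith)

lemma Gc_mono {ia b : ℝ} (hia : 0 ≤ ia) (hb : 0 ≤ b) (n : ℕ) {M N : ℕ} (h : M ≤ N) :
    Gc ia b n M ≤ Gc ia b n N := by
  unfold Gc
  apply mul_le_mul_of_nonneg_left _ (mul_nonneg (aC_pos ia).le hb)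
  have hc : ((M:ℝ)) ≤ (N:ℝ) := by exact_mod_cast h
  have h1 : Real.sqrt ((M:ℝ)*(n:ℝ)) ≤ Real.sqrt ((N:ℝ)*(n:ℝ)) := by
    apply Real.sqrt_le_sqrt
    have : (0:ℝ) ≤ (n:ℝ) := by positivity
    nlinarith
  have h2 : (M:ℝ)^ia ≤ (N:ℝ)^ia := Real.rpow_le_rpow (by positivity) hc hia
  linarith

lemma core {Ω : Type*} [MeasurableSpace Ω] {μ : Measure Ω} [IsProbabilityMeasure μ]
    {n : ℕ} {Y : Fin n → Ω → ℝ} (hYmeas : ∀ i, Measurable (Y i))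
    (hYindep : iIndepFun Y μ)
    (hYcent : ∀ i, ∫ ω, Y i ω ∂μ = 0)
    {ia b : ℝ} (hia : 1 ≤ ia) (hb : 0 < b)
    (hYint : ∀ i (m : ℕ), Integrable (fun ω => |Y i ω|^m) μ)
    (hYmom : ∀ i (m : ℕ), 1 ≤ m → ∫ ω, |Y i ω|^m ∂μ ≤ (b * (m:ℝ)^ia)^m) :
    ∀ (k : ℕ) (J : Finset (Fin n)),
      ∫ ω, |∑ i ∈ J, Y i ω|^(2*k) ∂μ ≤ Gc ia b n (2*k) ^ (2*k) := by
  classical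
  intro k
  induction k using Nat.strong_induction_on with
  | _ k IH =>
  intro J
  rcases Nat.eq_zero_or_pos k with hk0 | hkpos
  · subst hk0
    simp [integral_const]
  set N := 2*k with hN
  have hN2 : 2 ≤ N := by omega
  rcases Finset.eq_empty_or_nonempty J with hJe | hJne
  · rw [hJe]
    simp only [Finset.sum_empty, abs_zero]
    rw [zero_pow (by omega : N ≠ 0)]
    rw [integral_zero]
    exact pow_nonneg (Gc_nonneg hb.le _ _) _
  obtain ⟨i₀, hi₀⟩ := hJne
  have hn1 : 1 ≤ n := by have := i₀.isLt; omega
  set G := Gc ia b n N with hG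
  have hG0 : 0 < G := Gc_pos hb (by omega)
  have hia0 : (0:ℝ) ≤ ia := by linarith
  -- helper: all moments up to N-2 of any partial sum
  have HM : ∀ (T : Finset (Fin n)) (M : ℕ), M ≤ N - 2 →
      ∫ ω, |∑ i ∈ T, Y i ω|^M ∂μ ≤ 2 * G^M := by
    intro T M hM
    rcases Nat.even_or_odd M with ⟨r, hr⟩ | ⟨r, hr⟩
    · have hrk : r < k := by omega
      have h1 := IH r hrk T
      have hM2 : M = 2*r := by omega
      rw [hM2]
      have h2 : Gc ia b n (2*r) ≤ G := Gc_mono hia0 hb.le n (by omega)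
      calc ∫ ω, |∑ i ∈ T, Y i ω|^(2*r) ∂μ ≤ Gc ia b n (2*r) ^ (2*r) := h1
        _ ≤ G^(2*r) := pow_le_pow_left₀ (Gc_nonneg hb.le _ _) h2 _
        _ ≤ 2*G^(2*r) := by nlinarith [pow_nonneg hG0.le (2*r)]
    · have hr1k : r + 1 < k := by omega
      have h1 := IH (r+1) hr1k T
      have hM1 : M + 1 = 2*(r+1) := by omega
      have hint_M := integrable_abs_pow_sum hYmeas hYint M T
      have hint_M1 := integrable_abs_pow_sum hYmeas hYint (M+1) T
      have hpt : ∀ ω, |∑ i ∈ T, Y i ω|^M ≤ G^M + |∑ i ∈ T, Y i ω|^(M+1)/G :=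
        fun ω => aux_pow_lam (abs_nonneg _) hG0 M
      have hSM1 : ∫ ω, |∑ i ∈ T, Y i ω|^(M+1) ∂μ ≤ G^(M+1) := by
        have h2 : Gc ia b n (M+1) ≤ G := Gc_mono hia0 hb.le n (by omega)
        calc ∫ ω, |∑ i ∈ T, Y i ω|^(M+1) ∂μ
            = ∫ ω, |∑ i ∈ T, Y i ω|^(2*(r+1)) ∂μ := by rw [hM1]
          _ ≤ Gc ia b n (2*(r+1)) ^ (2*(r+1)) := h1
          _ = Gc ia b n (M+1) ^ (M+1) := by rw [← hM1]
          _ ≤ G^(M+1) := pow_le_pow_left₀ (Gc_nonneg hb.le _ _) h2 _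
      calc ∫ ω, |∑ i ∈ T, Y i ω|^M ∂μ
          ≤ ∫ ω, (G^M + |∑ i ∈ T, Y i ω|^(M+1)/G) ∂μ :=
            integral_mono hint_M ((integrable_const _).add (hint_M1.div_const G)) hpt
        _ = G^M + (∫ ω, |∑ i ∈ T, Y i ω|^(M+1) ∂μ)/G := by
            rw [integral_add (integrable_const _) (hint_M1.div_const G),
              integral_const, integral_div]
            simp
        _ ≤ G^M + G^(M+1)/G := by
            gcongr
        _ = 2*G^M := by
            rw [pow_succ]
            field_simp
            ring
  -- independence of powers
  have hindep_pair : ∀ (i : Fin n) (a c : ℕ),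
      IndepFun (fun ω => (Y i ω)^a) (fun ω => (∑ i' ∈ J.erase i, Y i' ω)^c) μ := by
    intro i a c
    have h0 : IndepFun (Y i) (fun ω => ∑ i' ∈ J.erase i, Y i' ω) μ := by
      have h := (hYindep.indepFun_finsetSum_of_notMem hYmeas
        (Finset.notMem_erase i J)).symm
      have he : (∑ j ∈ J.erase i, Y j) = (fun ω => ∑ i' ∈ J.erase i, Y i' ω) := by
        funext ω; simp
      rwa [he] at h
    exact h0.comp (measurable_id.pow_const a) (measurable_id.pow_const c)
  have hYpow_int : ∀ (i : Fin n) (a : ℕ), Integrable (fun ω => (Y i ω)^a) μ := by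
    intro i a
    refine Integrable.mono' (hYint i a) (((hYmeas i).pow_const a)).aestronglyMeasurable ?_
    filter_upwards with ω
    rw [Real.norm_eq_abs, ← abs_pow]
  have hprod_int : ∀ (i : Fin n) (a c : ℕ),
      Integrable (fun ω => (Y i ω)^a * (∑ i' ∈ J.erase i, Y i' ω)^c) μ := by
    intro i a c
    exact (hindep_pair i a c).integrable_mul (hYpow_int i a)
      (integrable_pow_sum hYmeas hYint c (J.erase i))
  -- pointwise expansion
  have hexp_pt : ∀ ω, (∑ i ∈ J, Y i ω)^N
      = ∑ i ∈ J, ∑ j ∈ Finset.range N,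
          (Y i ω)^(j+1) * (∑ i' ∈ J.erase i, Y i' ω)^(N-1-j) * ((N-1).choose j : ℝ) := by
    intro ω
    have h1 : (∑ i ∈ J, Y i ω)^N = ∑ i ∈ J, Y i ω * (∑ i' ∈ J, Y i' ω)^(N-1) := by
      rw [← Finset.sum_mul, ← pow_succ']
      congr 1
      omega
    rw [h1]
    apply Finset.sum_congr rfl
    intro i hi
    have h2 : ∑ i' ∈ J, Y i' ω = Y i ω + ∑ i' ∈ J.erase i, Y i' ω := by
      rw [← Finset.sum_erase_add J _ hi]
      ring
    rw [h2, add_pow, show N-1+1 = N by omega, Finset.mul_sum]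
    apply Finset.sum_congr rfl
    intro j hj
    rw [pow_succ]
    ring
  -- integral identity
  have hkey : ∫ ω, (∑ i ∈ J, Y i ω)^N ∂μ
      = ∑ i ∈ J, ∑ j ∈ Finset.range N,
          ((∫ ω, (Y i ω)^(j+1) ∂μ) * (∫ ω, (∑ i' ∈ J.erase i, Y i' ω)^(N-1-j) ∂μ))
            * ((N-1).choose j : ℝ) := by
    rw [integral_congr_ae (Filter.Eventually.of_forall hexp_pt)]
    rw [integral_finset_sum J (fun i _ => integrable_finset_sum _
      (fun j _ => ((hprod_int i (j+1) (N-1-j)).mul_const _)))]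
    apply Finset.sum_congr rfl
    intro i _
    rw [integral_finset_sum _ (fun j _ => ((hprod_int i (j+1) (N-1-j)).mul_const _))]
    apply Finset.sum_congr rfl
    intro j _
    rw [integral_mul_const]
    congr 1
    exact (hindep_pair i (j+1) (N-1-j)).integral_fun_mul_eq_mul_integral
      (((hYmeas i).pow_const _).aestronglyMeasurable)
      (((Finset.measurable_sum _ (fun i' _ => hYmeas i')).pow_const _).aestronglyMeasurable)
  -- bound each inner sum
  set T : ℝ := ∑ j ∈ Finset.Ico 1 N,
      2 * ((N-1).choose j : ℝ) * (b * ((j:ℝ)+1)^ia)^(j+1) * G^(N-1-j) with hT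
  have hTnn : 0 ≤ T := by
    apply Finset.sum_nonneg
    intro j _
    have h1 : (0:ℝ) ≤ ((N-1).choose j : ℝ) := Nat.cast_nonneg _
    have h2 : (0:ℝ) ≤ (b * ((j:ℝ)+1)^ia)^(j+1) := by positivity
    have h3 : (0:ℝ) ≤ G^(N-1-j) := pow_nonneg hG0.le _
    positivity
  have hinner : ∀ i ∈ J, ∑ j ∈ Finset.range N,
      ((∫ ω, (Y i ω)^(j+1) ∂μ) * (∫ ω, (∑ i' ∈ J.erase i, Y i' ω)^(N-1-j) ∂μ))
        * ((N-1).choose j : ℝ) ≤ T := by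
    intro i _
    rw [Finset.range_eq_Ico, Finset.sum_eq_sum_Ico_succ_bot (by omega : 0 < N)]
    have hzero : ((∫ ω, (Y i ω)^(0+1) ∂μ) * (∫ ω, (∑ i' ∈ J.erase i, Y i' ω)^(N-1-0) ∂μ))
        * ((N-1).choose 0 : ℝ) = 0 := by
      simp only [zero_add, pow_one]
      rw [hYcent i]
      ring
    rw [hzero, zero_add, hT]
    apply Finset.sum_le_sum
    intro j hj
    rw [Finset.mem_Ico] at hj
    obtain ⟨hj1, hjN⟩ := hj
    set A : ℝ := ∫ ω, (Y i ω)^(j+1) ∂μ with hA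
    set B : ℝ := ∫ ω, (∑ i' ∈ J.erase i, Y i' ω)^(N-1-j) ∂μ with hB
    have hAbound : |A| ≤ (b * ((j:ℝ)+1)^ia)^(j+1) := by
      have h1 : |A| ≤ ∫ ω, |Y i ω|^(j+1) ∂μ := by
        rw [hA]
        calc |∫ ω, (Y i ω)^(j+1) ∂μ| = ‖∫ ω, (Y i ω)^(j+1) ∂μ‖ := (Real.norm_eq_abs _).symm
          _ ≤ ∫ ω, ‖(Y i ω)^(j+1)‖ ∂μ := norm_integral_le_integral_norm _
          _ = ∫ ω, |Y i ω|^(j+1) ∂μ := by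
              apply integral_congr_ae
              filter_upwards with ω
              rw [Real.norm_eq_abs, abs_pow]
      refine h1.trans ?_
      have h2 := hYmom i (j+1) (by omega)
      have hc : (((j+1):ℕ):ℝ) = (j:ℝ)+1 := by push_cast; ring
      rwa [hc] at h2
    have hBbound : |B| ≤ 2 * G^(N-1-j) := by
      have h1 : |B| ≤ ∫ ω, |∑ i' ∈ J.erase i, Y i' ω|^(N-1-j) ∂μ := by
        rw [hB]
        calc |∫ ω, (∑ i' ∈ J.erase i, Y i' ω)^(N-1-j) ∂μ|
            = ‖∫ ω, (∑ i' ∈ J.erase i, Y i' ω)^(N-1-j) ∂μ‖ := (Real.norm_eq_abs _).symm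
          _ ≤ ∫ ω, ‖(∑ i' ∈ J.erase i, Y i' ω)^(N-1-j)‖ ∂μ := norm_integral_le_integral_norm _
          _ = ∫ ω, |∑ i' ∈ J.erase i, Y i' ω|^(N-1-j) ∂μ := by
              apply integral_congr_ae
              filter_upwards with ω
              rw [Real.norm_eq_abs, abs_pow]
      exact h1.trans (HM (J.erase i) (N-1-j) (by omega))
    have hABC : A * B * ((N-1).choose j : ℝ)
        ≤ ((b * ((j:ℝ)+1)^ia)^(j+1) * (2 * G^(N-1-j))) * ((N-1).choose j : ℝ) := by
      apply mul_le_mul_of_nonneg_right _ (Nat.cast_nonneg _)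
      calc A * B ≤ |A * B| := le_abs_self _
        _ = |A| * |B| := abs_mul _ _
        _ ≤ (b * ((j:ℝ)+1)^ia)^(j+1) * (2 * G^(N-1-j)) := by
            apply mul_le_mul hAbound hBbound (abs_nonneg _) (by positivity)
    refine hABC.trans ?_
    apply le_of_eq
    ring
  -- assemble
  have heven : ∀ ω, |∑ i ∈ J, Y i ω|^N = (∑ i ∈ J, Y i ω)^N := by
    intro ω
    exact Even.pow_abs (by rw [hN]; exact even_two_mul k) _
  have hcard : (J.card : ℝ) ≤ (n:ℝ) := by
    have h : J.card ≤ n := by simpa using Finset.card_le_univ J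
    exact_mod_cast h
  calc ∫ ω, |∑ i ∈ J, Y i ω|^N ∂μ
      = ∫ ω, (∑ i ∈ J, Y i ω)^N ∂μ := integral_congr_ae (Filter.Eventually.of_forall heven)
    _ = ∑ i ∈ J, ∑ j ∈ Finset.range N,
          ((∫ ω, (Y i ω)^(j+1) ∂μ) * (∫ ω, (∑ i' ∈ J.erase i, Y i' ω)^(N-1-j) ∂μ))
            * ((N-1).choose j : ℝ) := hkey
    _ ≤ J.card • T := Finset.sum_le_card_nsmul _ _ _ hinner
    _ = (J.card : ℝ) * T := nsmul_eq_mul _ _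
    _ ≤ (n:ℝ) * T := mul_le_mul_of_nonneg_right hcard hTnn
    _ ≤ G^N := by
        rw [hT, hG]
        exact numeric hia hb hn1 hN2

/-- Moment bound for sums of independent sub-Weibull random variables:
`‖Σ (ξ_i − E[ξ_i])‖_p ≤ C_α K (√(pn) + p^{1/α})` for all `p ≥ 1`. -/
theorem stmt14 (α : ℝ) (hα0 : 0 < α) (hα1 : α ≤ 1) :
    ∃ C : ℝ, 0 < C ∧
      ∀ (Ω : Type) [MeasurableSpace Ω] (μ : Measure Ω) [IsProbabilityMeasure μ]
        (n : ℕ) (ξ : Fin n → Ω → ℝ), (∀ i, Measurable (ξ i)) →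
        iIndepFun ξ μ →
        ∀ K : ℝ, 0 < K → (∀ i, psiNorm α μ (ξ i) ≤ ENNReal.ofReal K) →
        ∀ p : ℝ, 1 ≤ p →
          (∫⁻ ω, ENNReal.ofReal (|∑ i, (ξ i ω - ∫ ω', ξ i ω' ∂μ)| ^ p) ∂μ) ^ (1 / p)
            ≤ ENNReal.ofReal (C * K * (Real.sqrt (p * n) + p ^ (1 / α))) := by
  have hia : (1:ℝ) ≤ 1/α := by rw [le_div_iff₀ hα0]; linarith
  have hiapos : (0:ℝ) < 1/α := div_pos one_pos hα0
  have hiaia : (0:ℝ) < (1/α)^(1/α) := Real.rpow_pos_of_pos hiapos _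
  have h4ia : (1:ℝ) ≤ (4:ℝ)^(1/α) := Real.one_le_rpow (by norm_num) hiapos.le
  refine ⟨aC (1/α) * (16*(1/α)^(1/α)) * (2*(4:ℝ)^(1/α)), ?_, ?_⟩
  · have h1 := aC_pos (1/α)
    positivity
  intro Ω _ μ _ n ξ hξmeas hξindep K hK hpsi p hp
  have hp0 : (0:ℝ) < p := by linarith
  have hb0 : (0:ℝ) < 4*K*(1/α)^(1/α) := by positivity
  have hbpos : (0:ℝ) < 4*(4*K*(1/α)^(1/α)) := by linarith
  have hYmeas : ∀ i, Measurable (fun ω => ξ i ω - ∫ ω', ξ i ω' ∂μ) :=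
    fun i => (hξmeas i).sub_const _
  have hmom : ∀ (i : Fin n) (m : ℕ), 1 ≤ m →
      Integrable (fun ω => |ξ i ω - ∫ ω', ξ i ω' ∂μ|^m) μ ∧
      ∫ ω, |ξ i ω - ∫ ω', ξ i ω' ∂μ|^m ∂μ
        ≤ (4*(4*K*(1/α)^(1/α)) * (m:ℝ)^(1/α))^m := by
    intro i m hm
    exact cent_moment μ hia hb0 (hξmeas i)
      (fun m' hm' => psi_moment μ hα0 hK (hξmeas i) (hpsi i) m' hm') m hm
  have hYint : ∀ (i : Fin n) (m : ℕ),
      Integrable (fun ω => |ξ i ω - ∫ ω', ξ i ω' ∂μ|^m) μ := by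
    intro i m
    rcases Nat.eq_zero_or_pos m with h0 | h1
    · subst h0; simp only [pow_zero]; exact integrable_const 1
    · exact (hmom i m h1).1
  have hYindep : iIndepFun
      (fun i => fun ω => ξ i ω - ∫ ω', ξ i ω' ∂μ) μ :=
    hξindep.comp (fun i => fun x => x - ∫ ω', ξ i ω' ∂μ)
      (fun i => measurable_id.sub_const _)
  have hYcent : ∀ i, ∫ ω, (ξ i ω - ∫ ω', ξ i ω' ∂μ) ∂μ = 0 := by
    intro i
    have hint_i : Integrable (ξ i) μ := by
      have h := (psi_moment μ hα0 hK (hξmeas i) (hpsi i) 1 le_rfl).1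
      simp only [pow_one] at h
      rw [← integrable_norm_iff (hξmeas i).aestronglyMeasurable]
      simpa [Real.norm_eq_abs] using h
    rw [integral_sub hint_i (integrable_const _), integral_const]
    simp
  have hcore := core (μ := μ) (Y := fun i => fun ω => ξ i ω - ∫ ω', ξ i ω' ∂μ)
    hYmeas hYindep hYcent hia hbpos hYint (fun i m hm => (hmom i m hm).2)
  set k : ℕ := ⌈p⌉₊ with hk
  have hk1 : 1 ≤ k := Nat.ceil_pos.mpr hp0
  have hNp : p ≤ ((2*k : ℕ):ℝ) := by
    have h1 := Nat.le_ceil p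
    push_cast
    rw [hk] at *
    push_cast at h1
    linarith
  have hN4p : ((2*k:ℕ):ℝ) ≤ 4*p := by
    have h2 := Nat.ceil_lt_add_one (show (0:ℝ) ≤ p by linarith)
    push_cast
    rw [hk] at *
    push_cast at h2
    linarith
  have hS_aesm : AEStronglyMeasurable (fun ω => ∑ i, (ξ i ω - ∫ ω', ξ i ω' ∂μ)) μ :=
    (Finset.measurable_sum _ (fun i _ => hYmeas i)).aestronglyMeasurable
  have hSint : Integrable (fun ω => |∑ i, (ξ i ω - ∫ ω', ξ i ω' ∂μ)|^(2*k)) μ :=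
    integrable_abs_pow_sum hYmeas hYint (2*k) Finset.univ
  -- Step A
  have hA : (∫⁻ ω, ENNReal.ofReal (|∑ i, (ξ i ω - ∫ ω', ξ i ω' ∂μ)| ^ p) ∂μ) ^ (1/p)
      = eLpNorm (fun ω => ∑ i, (ξ i ω - ∫ ω', ξ i ω' ∂μ)) (ENNReal.ofReal p) μ := by
    rw [eLpNorm_eq_lintegral_rpow_enorm_toReal
      (by simp only [ne_eq, ENNReal.ofReal_eq_zero, not_le]; linarith)
      ENNReal.ofReal_ne_top]
    rw [ENNReal.toReal_ofReal hp0.le]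
    congr 1
    apply lintegral_congr
    intro ω
    rw [← ENNReal.ofReal_rpow_of_nonneg (abs_nonneg _) hp0.le]
    congr 1
    rw [← Real.enorm_eq_ofReal (abs_nonneg _)]
    simp
  -- Step B
  have hB : eLpNorm (fun ω => ∑ i, (ξ i ω - ∫ ω', ξ i ω' ∂μ)) (ENNReal.ofReal p) μ
      ≤ eLpNorm (fun ω => ∑ i, (ξ i ω - ∫ ω', ξ i ω' ∂μ)) ((2*k : ℕ) : ℝ≥0∞) μ := by
    apply eLpNorm_le_eLpNorm_of_exponent_le _ hS_aesm
    rw [← ENNReal.ofReal_natCast]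
    exact ENNReal.ofReal_le_ofReal hNp
  -- Step C
  have hNne0 : ((2*k:ℕ) : ℝ≥0∞) ≠ 0 := by
    simp only [ne_eq, Nat.cast_eq_zero]
    omega
  have hNr0 : (0:ℝ) < ((2*k:ℕ):ℝ) := by
    have : (0:ℕ) < 2*k := by omega
    exact_mod_cast this
  have hC : eLpNorm (fun ω => ∑ i, (ξ i ω - ∫ ω', ξ i ω' ∂μ)) ((2*k : ℕ) : ℝ≥0∞) μ
      ≤ ENNReal.ofReal (Gc (1/α) (4*(4*K*(1/α)^(1/α))) n (2*k)) := by
    rw [eLpNorm_eq_lintegral_rpow_enorm_toReal hNne0 (ENNReal.natCast_ne_top _)]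
    have ht : ((2*k:ℕ) : ℝ≥0∞).toReal = ((2*k:ℕ):ℝ) := by simp
    rw [ht]
    have hlif : ∫⁻ ω, ‖∑ i, (ξ i ω - ∫ ω', ξ i ω' ∂μ)‖ₑ ^ (((2*k:ℕ)):ℝ) ∂μ
        = ENNReal.ofReal (∫ ω, |∑ i, (ξ i ω - ∫ ω', ξ i ω' ∂μ)|^(2*k) ∂μ) := by
      rw [ofReal_integral_eq_lintegral_ofReal hSint
        (Filter.Eventually.of_forall (fun ω => by positivity))]
      apply lintegral_congr
      intro ω
      rw [ENNReal.rpow_natCast]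
      rw [ENNReal.ofReal_pow (abs_nonneg _)]
      congr 1
      rw [← Real.enorm_eq_ofReal (abs_nonneg _)]
      simp
    rw [hlif]
    have hE := hcore k Finset.univ
    calc (ENNReal.ofReal (∫ ω, |∑ i, (ξ i ω - ∫ ω', ξ i ω' ∂μ)|^(2*k) ∂μ)) ^ (1/((2*k:ℕ):ℝ))
        ≤ (ENNReal.ofReal (Gc (1/α) (4*(4*K*(1/α)^(1/α))) n (2*k) ^ (2*k))) ^ (1/((2*k:ℕ):ℝ)) := by
          apply ENNReal.rpow_le_rpow _ (by positivity)
          exact ENNReal.ofReal_le_ofReal hE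
      _ = ENNReal.ofReal (Gc (1/α) (4*(4*K*(1/α)^(1/α))) n (2*k)) := by
          rw [ENNReal.ofReal_pow (Gc_nonneg hbpos.le _ _)]
          rw [← ENNReal.rpow_natCast (ENNReal.ofReal _) (2*k)]
          rw [← ENNReal.rpow_mul]
          rw [show ((2*k:ℕ):ℝ) * (1/((2*k:ℕ):ℝ)) = 1 by field_simp]
          exact ENNReal.rpow_one _
  -- Step D
  have hD : Gc (1/α) (4*(4*K*(1/α)^(1/α))) n (2*k)
      ≤ (aC (1/α) * (16*(1/α)^(1/α)) * (2*(4:ℝ)^(1/α))) * K * (Real.sqrt (p*(n:ℝ)) + p^(1/α)) := by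
    unfold Gc
    have h1 : Real.sqrt (((2*k:ℕ):ℝ)*(n:ℝ)) ≤ 2*Real.sqrt (p*(n:ℝ)) := by
      have hmul : ((2*k:ℕ):ℝ)*(n:ℝ) ≤ (4*p)*(n:ℝ) :=
        mul_le_mul_of_nonneg_right hN4p (by positivity)
      calc Real.sqrt (((2*k:ℕ):ℝ)*(n:ℝ)) ≤ Real.sqrt ((4*p)*(n:ℝ)) := Real.sqrt_le_sqrt hmul
        _ = Real.sqrt 4 * Real.sqrt (p*(n:ℝ)) := by
            rw [← Real.sqrt_mul (by norm_num) _]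
            congr 1
            ring
        _ = 2*Real.sqrt (p*(n:ℝ)) := by
            rw [show (4:ℝ) = 2^2 by norm_num, Real.sqrt_sq (by norm_num)]
    have h2 : ((2*k:ℕ):ℝ)^(1/α) ≤ (4:ℝ)^(1/α) * p^(1/α) := by
      calc ((2*k:ℕ):ℝ)^(1/α) ≤ ((4*p):ℝ)^(1/α) :=
            Real.rpow_le_rpow (by positivity) hN4p (by positivity)
        _ = (4:ℝ)^(1/α)*p^(1/α) := Real.mul_rpow (by norm_num) (by linarith)
    have hsum : Real.sqrt (((2*k:ℕ):ℝ)*(n:ℝ)) + ((2*k:ℕ):ℝ)^(1/α)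
        ≤ (2*(4:ℝ)^(1/α)) * (Real.sqrt (p*(n:ℝ)) + p^(1/α)) := by
      have hs0 : (0:ℝ) ≤ Real.sqrt (p*(n:ℝ)) := Real.sqrt_nonneg _
      have ht0 : (0:ℝ) ≤ p^(1/α) := Real.rpow_nonneg (by linarith) _
      nlinarith [h1, h2, h4ia, hs0, ht0]
    calc aC (1/α) * (4*(4*K*(1/α)^(1/α))) * (Real.sqrt (((2*k:ℕ):ℝ)*(n:ℝ)) + ((2*k:ℕ):ℝ)^(1/α))
        ≤ aC (1/α) * (4*(4*K*(1/α)^(1/α))) * ((2*(4:ℝ)^(1/α)) * (Real.sqrt (p*(n:ℝ)) + p^(1/α))) := by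
          apply mul_le_mul_of_nonneg_left hsum
          have := aC_pos (1/α)
          positivity
      _ = (aC (1/α) * (16*(1/α)^(1/α)) * (2*(4:ℝ)^(1/α))) * K * (Real.sqrt (p*(n:ℝ)) + p^(1/α)) := by
          ring
  calc (∫⁻ ω, ENNReal.ofReal (|∑ i, (ξ i ω - ∫ ω', ξ i ω' ∂μ)| ^ p) ∂μ) ^ (1/p)
      = eLpNorm (fun ω => ∑ i, (ξ i ω - ∫ ω', ξ i ω' ∂μ)) (ENNReal.ofReal p) μ := hA
    _ ≤ eLpNorm (fun ω => ∑ i, (ξ i ω - ∫ ω', ξ i ω' ∂μ)) ((2*k : ℕ) : ℝ≥0∞) μ := hB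
    _ ≤ ENNReal.ofReal (Gc (1/α) (4*(4*K*(1/α)^(1/α))) n (2*k)) := hC
    _ ≤ ENNReal.ofReal ((aC (1/α) * (16*(1/α)^(1/α)) * (2*(4:ℝ)^(1/α))) * K * (Real.sqrt (p*(n:ℝ)) + p^(1/α))) :=
        ENNReal.ofReal_le_ofReal hD
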